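/- Let f(x) ∈ F_2[x] be a polynomial of degree m ≥ 1 with no repeated roots (i.e., f is squarefree), let r be the number of irreducible factors of f over F_2 counted with multiplicity, and let F(x) ∈ ℤ[x] be any monic polynomial of degree m whose reduction modulo 2 equals f. Then the discriminant D(F) is congruent to 1 or 5 modulo 8, and moreover r ≡ m (mod 2) if and only if D(F) ≡ 1 (mod 8). -/

import Mathlib

open Polynomial Equiv Finset

namespace SwanAux

noncomputable local instance : DecidableEq (AlgebraicClosure (ZMod 2)) := Classical.decEq _
noncomputable local instance : DecidableEq (Polynomial (ZMod 2)) := Classical.decEq _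
local notation "K" => AlgebraicClosure (ZMod 2)

variable {m : ℕ}

noncomputable def Pval {A : Type*} [CommRing A] (v : Fin m → A) : A :=
  ∑ σ ∈ Finset.univ.filter (fun σ : Equiv.Perm (Fin m) => Equiv.Perm.sign σ = 1),
    ∏ i, v (σ i) ^ (i : ℕ)

noncomputable def Nval {A : Type*} [CommRing A] (v : Fin m → A) : A :=
  ∑ σ ∈ Finset.univ.filter (fun σ : Equiv.Perm (Fin m) => Equiv.Perm.sign σ = -1),
    ∏ i, v (σ i) ^ (i : ℕ)

theorem Pval_sub_Nval {A : Type*} [CommRing A] (v : Fin m → A) :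
    Pval v - Nval v = ∏ i, ∏ j ∈ Finset.Ioi i, (v j - v i) := by
  rw [← Matrix.det_vandermonde, Matrix.det_apply]
  rw [← Finset.sum_filter_add_sum_filter_not Finset.univ
    (fun σ : Equiv.Perm (Fin m) => Equiv.Perm.sign σ = 1)]
  have h1 : ∀ σ ∈ Finset.univ.filter (fun σ : Equiv.Perm (Fin m) => Equiv.Perm.sign σ = 1),
      Equiv.Perm.sign σ • ∏ i, Matrix.vandermonde v (σ i) i = ∏ i, v (σ i) ^ (i : ℕ) := by
    intro σ hσ
    rw [Finset.mem_filter] at hσ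
    rw [hσ.2, one_smul]
    rfl
  have h2 : ∀ σ ∈ Finset.univ.filter (fun σ : Equiv.Perm (Fin m) => ¬ Equiv.Perm.sign σ = 1),
      Equiv.Perm.sign σ • ∏ i, Matrix.vandermonde v (σ i) i = -(∏ i, v (σ i) ^ (i : ℕ)) := by
    intro σ hσ
    rw [Finset.mem_filter] at hσ
    rcases Int.units_eq_one_or (Equiv.Perm.sign σ) with h | h
    · exact absurd h hσ.2
    · rw [h]; simp [Matrix.vandermonde]
  rw [Finset.sum_congr rfl h1, Finset.sum_congr rfl h2]
  have h3 : (Finset.univ.filter (fun σ : Equiv.Perm (Fin m) => ¬ Equiv.Perm.sign σ = 1))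
      = Finset.univ.filter (fun σ : Equiv.Perm (Fin m) => Equiv.Perm.sign σ = -1) := by
    apply Finset.filter_congr
    intro σ _
    rcases Int.units_eq_one_or (Equiv.Perm.sign σ) with h | h <;> simp [h]
  rw [h3, Finset.sum_neg_distrib, Pval, Nval, sub_eq_add_neg]

theorem map_Pval {A B : Type*} [CommRing A] [CommRing B] (g : A →+* B) (v : Fin m → A) :
    g (Pval v) = Pval (fun i => g (v i)) := by
  simp [Pval, map_sum, map_prod, map_pow]

theorem map_Nval {A B : Type*} [CommRing A] [CommRing B] (g : A →+* B) (v : Fin m → A) :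
    g (Nval v) = Nval (fun i => g (v i)) := by
  simp [Nval, map_sum, map_prod, map_pow]

theorem sum_perm_comp {A : Type*} [AddCommMonoid A] (π : Equiv.Perm (Fin m)) (s : ℤˣ)
    (T : Equiv.Perm (Fin m) → A) :
    ∑ σ ∈ Finset.univ.filter (fun σ : Equiv.Perm (Fin m) => Equiv.Perm.sign σ = s), T (π * σ)
      = ∑ τ ∈ Finset.univ.filter
          (fun τ : Equiv.Perm (Fin m) => Equiv.Perm.sign τ = Equiv.Perm.sign π * s), T τ := by
  apply Finset.sum_nbij' (fun σ => π * σ) (fun τ => π⁻¹ * τ)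
  · intro σ hσ
    rw [Finset.mem_filter] at hσ ⊢
    simp [hσ.2]
  · intro τ hτ
    rw [Finset.mem_filter] at hτ ⊢
    simp only [Finset.mem_univ, true_and, map_mul, map_inv, hτ.2]
    rw [← mul_assoc]
    rcases Int.units_eq_one_or (Equiv.Perm.sign π) with h | h <;> simp [h]
  · intro σ _; group
  · intro τ _; group
  · intro σ _; rfl

theorem Pval_comp_perm {A : Type*} [CommRing A] (v : Fin m → A) (π : Equiv.Perm (Fin m)) :
    Pval (fun i => v (π i)) = if Equiv.Perm.sign π = 1 then Pval v else Nval v := by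
  have key : Pval (fun i => v (π i))
      = ∑ τ ∈ Finset.univ.filter
          (fun τ : Equiv.Perm (Fin m) => Equiv.Perm.sign τ = Equiv.Perm.sign π * 1),
          ∏ i, v (τ i) ^ (i : ℕ) := by
    rw [Pval, ← sum_perm_comp π 1 (fun τ => ∏ i, v (τ i) ^ (i : ℕ))]
    rfl
  rcases Int.units_eq_one_or (Equiv.Perm.sign π) with h | h <;> rw [key, h] <;> simp [Pval, Nval]

theorem Nval_comp_perm {A : Type*} [CommRing A] (v : Fin m → A) (π : Equiv.Perm (Fin m)) :
    Nval (fun i => v (π i)) = if Equiv.Perm.sign π = 1 then Nval v else Pval v := by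
  have key : Nval (fun i => v (π i))
      = ∑ τ ∈ Finset.univ.filter
          (fun τ : Equiv.Perm (Fin m) => Equiv.Perm.sign τ = Equiv.Perm.sign π * (-1)),
          ∏ i, v (τ i) ^ (i : ℕ) := by
    rw [Nval, ← sum_perm_comp π (-1) (fun τ => ∏ i, v (τ i) ^ (i : ℕ))]
    rfl
  rcases Int.units_eq_one_or (Equiv.Perm.sign π) with h | h <;> rw [key, h] <;> simp [Pval, Nval]


noncomputable def PP (m : ℕ) : MvPolynomial (Fin m) ℤ := Pval (fun i => MvPolynomial.X i)
noncomputable def NN (m : ℕ) : MvPolynomial (Fin m) ℤ := Nval (fun i => MvPolynomial.X i)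

theorem aeval_PP {A : Type*} [CommRing A] (v : Fin m → A) :
    MvPolynomial.aeval v (PP m) = Pval v := by
  rw [PP, show (MvPolynomial.aeval v) (Pval fun i => MvPolynomial.X i)
      = (MvPolynomial.aeval v).toRingHom (Pval fun i => MvPolynomial.X i) from rfl,
    map_Pval]
  simp

theorem aeval_NN {A : Type*} [CommRing A] (v : Fin m → A) :
    MvPolynomial.aeval v (NN m) = Nval v := by
  rw [NN, show (MvPolynomial.aeval v) (Nval fun i => MvPolynomial.X i)
      = (MvPolynomial.aeval v).toRingHom (Nval fun i => MvPolynomial.X i) from rfl,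
    map_Nval]
  simp

theorem rename_PP (e : Equiv.Perm (Fin m)) :
    MvPolynomial.rename e (PP m) = if Equiv.Perm.sign e = 1 then PP m else NN m := by
  rw [PP, show (MvPolynomial.rename e) (Pval fun i => MvPolynomial.X i)
      = (MvPolynomial.rename e).toRingHom (Pval fun i => MvPolynomial.X i) from rfl,
    map_Pval]
  simp only [AlgHom.toRingHom_eq_coe, RingHom.coe_coe, MvPolynomial.rename_X]
  exact Pval_comp_perm (fun i => MvPolynomial.X i) e

theorem rename_NN (e : Equiv.Perm (Fin m)) :
    MvPolynomial.rename e (NN m) = if Equiv.Perm.sign e = 1 then NN m else PP m := by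
  rw [NN, show (MvPolynomial.rename e) (Nval fun i => MvPolynomial.X i)
      = (MvPolynomial.rename e).toRingHom (Nval fun i => MvPolynomial.X i) from rfl,
    map_Nval]
  simp only [AlgHom.toRingHom_eq_coe, RingHom.coe_coe, MvPolynomial.rename_X]
  exact Nval_comp_perm (fun i => MvPolynomial.X i) e

theorem symm_add : (PP m + NN m).IsSymmetric := by
  intro e
  rw [map_add, rename_PP, rename_NN]
  rcases Int.units_eq_one_or (Equiv.Perm.sign e) with h | h <;> simp [h, add_comm]

theorem symm_mul : (PP m * NN m).IsSymmetric := by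
  intro e
  rw [map_mul, rename_PP, rename_NN]
  rcases Int.units_eq_one_or (Equiv.Perm.sign e) with h | h <;> simp [h, mul_comm]

theorem transfer_aux {C : Type*} [CommRing C] (S : MvPolynomial (Fin m) ℤ)
    (Φ : MvPolynomial (Fin m) ℤ)
    (hval : MvPolynomial.aeval
      (fun i : Fin m => MvPolynomial.esymm (Fin m) ℤ ((i : ℕ) + 1)) Φ = S)
    (vC : Fin m → C) (cz : Fin m → ℤ)
    (hC : ∀ i : Fin m, algebraMap ℤ C (cz i)
      = MvPolynomial.aeval vC (MvPolynomial.esymm (Fin m) ℤ ((i : ℕ) + 1))) :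
    algebraMap ℤ C (MvPolynomial.aeval cz Φ) = MvPolynomial.aeval vC S := by
  have h1 : algebraMap ℤ C (MvPolynomial.aeval cz Φ)
      = MvPolynomial.aeval (fun i => algebraMap ℤ C (cz i)) Φ := by
    have := MvPolynomial.comp_aeval (R := ℤ) cz (Algebra.ofId ℤ C)
    exact congrFun (congrArg DFunLike.coe this) Φ
  rw [h1]
  have h2 : MvPolynomial.aeval
      (fun i : Fin m => MvPolynomial.aeval vC (MvPolynomial.esymm (Fin m) ℤ ((i : ℕ) + 1))) Φ
      = MvPolynomial.aeval vC S := by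
    rw [← hval]
    have := MvPolynomial.comp_aeval (R := ℤ)
      (fun i : Fin m => MvPolynomial.esymm (Fin m) ℤ ((i : ℕ) + 1)) (MvPolynomial.aeval vC)
    exact (congrFun (congrArg DFunLike.coe this) Φ).symm
  rw [← h2]
  have hfun : (fun i : Fin m => algebraMap ℤ C (cz i))
      = fun i : Fin m => MvPolynomial.aeval vC (MvPolynomial.esymm (Fin m) ℤ ((i : ℕ) + 1)) :=
    funext hC
  rw [hfun]

theorem transfer (S : MvPolynomial (Fin m) ℤ) (hS : S.IsSymmetric)
    {A B : Type*} [CommRing A] [CommRing B] (vA : Fin m → A) (vB : Fin m → B)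
    (cz : Fin m → ℤ)
    (hA : ∀ i : Fin m, algebraMap ℤ A (cz i)
      = MvPolynomial.aeval vA (MvPolynomial.esymm (Fin m) ℤ ((i : ℕ) + 1)))
    (hB : ∀ i : Fin m, algebraMap ℤ B (cz i)
      = MvPolynomial.aeval vB (MvPolynomial.esymm (Fin m) ℤ ((i : ℕ) + 1))) :
    ∃ z : ℤ, algebraMap ℤ A z = MvPolynomial.aeval vA S
      ∧ algebraMap ℤ B z = MvPolynomial.aeval vB S := by
  obtain ⟨Φ, hΦ⟩ := MvPolynomial.esymmAlgHom_fin_surjective (R := ℤ) (n := m) (le_refl m)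
    ⟨S, (MvPolynomial.mem_symmetricSubalgebra S).2 hS⟩
  have hval : MvPolynomial.aeval
      (fun i : Fin m => MvPolynomial.esymm (Fin m) ℤ ((i : ℕ) + 1)) Φ = S := by
    have := congrArg Subtype.val hΦ
    rwa [MvPolynomial.esymmAlgHom_apply] at this
  exact ⟨MvPolynomial.aeval cz Φ, transfer_aux S Φ hval vA cz hA, transfer_aux S Φ hval vB cz hB⟩

theorem coeff_prod_X_sub_C {A : Type*} [CommRing A] (v : Fin m → A) {k : ℕ} (hk : k ≤ m) :
    (∏ i, (X - C (v i))).coeff (m - k)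
      = (-1) ^ k * MvPolynomial.aeval v (MvPolynomial.esymm (Fin m) ℤ k) := by
  have h1 : ∀ i : Fin m, X - C (v i) = X + C (-(v i)) := by intro i; rw [map_neg]; ring
  have hcard : (Finset.univ : Finset (Fin m)).card = m := by simp
  have h2 := Finset.prod_X_add_C_coeff (Finset.univ : Finset (Fin m)) (fun i => -(v i))
    (k := m - k) (by rw [hcard]; omega)
  simp only [Finset.prod_congr rfl (fun i _ => h1 i)] at *
  rw [h2, hcard]
  have h3 : m - (m - k) = k := by omega
  rw [h3]
  have h4 : MvPolynomial.aeval v (MvPolynomial.esymm (Fin m) ℤ k)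
      = ∑ t ∈ Finset.powersetCard k Finset.univ, ∏ i ∈ t, v i := by
    simp [MvPolynomial.esymm, map_sum, map_prod]
  rw [h4, Finset.mul_sum]
  apply Finset.sum_congr rfl
  intro t ht
  have hc : t.card = k := (Finset.mem_powersetCard.1 ht).2
  calc ∏ x ∈ t, -v x = ∏ x ∈ t, (-1) * v x :=
        Finset.prod_congr rfl fun i _ => (neg_one_mul (v i)).symm
    _ = (-1) ^ k * ∏ i ∈ t, v i := by
        rw [Finset.prod_mul_distrib, Finset.prod_const, hc]

theorem pow_fixed {α : Type*} (τ : Equiv.Perm α) (a : α) (ha : τ a = a) (k : ℕ) :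
    (τ ^ k) a = a := by
  induction k with
  | zero => rfl
  | succ n ih => rw [pow_succ, Equiv.Perm.mul_apply, ha, ih]

theorem sign_of_transitive {α : Type*} [DecidableEq α] [Fintype α] [Nonempty α]
    (τ : Equiv.Perm α) (htrans : ∀ a b : α, ∃ k : ℕ, (τ ^ k) a = b) :
    Equiv.Perm.sign τ = (-1) ^ (Fintype.card α - 1) := by
  by_cases hτ : τ = 1
  · have hsub : ∀ a b : α, a = b := by
      intro a b
      obtain ⟨k, hk⟩ := htrans a b
      rw [hτ] at hk; simpa using hk
    have hcard : Fintype.card α = 1 := Fintype.card_eq_one_iff.2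
      ⟨Classical.arbitrary α, fun b => (hsub b _)⟩
    rw [hτ, hcard]
    simp
  · have hmove : ∀ a, τ a ≠ a := by
      intro a ha
      apply hτ
      ext b
      obtain ⟨k, hk⟩ := htrans a b
      have hba : b = a := by rw [← hk, pow_fixed τ a ha k]
      rw [hba]
      simpa using ha
    have hcyc : τ.IsCycle := by
      refine ⟨Classical.arbitrary α, hmove _, fun b _ => ?_⟩
      obtain ⟨k, hk⟩ := htrans (Classical.arbitrary α) b
      exact ⟨(k : ℤ), by simpa using hk⟩
    rw [hcyc.sign]
    have hsupp : τ.support = Finset.univ := by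
      ext a; simp [Equiv.Perm.mem_support, hmove a]
    rw [hsupp, Finset.card_univ]
    have h1 : 1 ≤ Fintype.card α := Fintype.card_pos
    obtain ⟨n, hn⟩ : ∃ n, Fintype.card α = n + 1 := ⟨Fintype.card α - 1, by omega⟩
    rw [hn]
    simp [pow_succ]

variable {m : ℕ} {β : Type*} [DecidableEq β]

theorem fiber_iff (π : Equiv.Perm (Fin m)) (c : Fin m → β) (hc : ∀ i, c (π i) = c i) (b : β) :
    ∀ a, c (π a) = b ↔ c a = b := fun a => by rw [hc a]

/-- `π` restricted to the fiber of `b`, extended by the identity. -/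
noncomputable def extPerm (π : Equiv.Perm (Fin m)) (c : Fin m → β)
    (hc : ∀ i, c (π i) = c i) (b : β) : Equiv.Perm (Fin m) :=
  (π.subtypePerm (fiber_iff π c hc b)).extendDomain
    (Equiv.refl (Subtype (fun a => c a = b)))

theorem extPerm_apply (π : Equiv.Perm (Fin m)) (c : Fin m → β)
    (hc : ∀ i, c (π i) = c i) (b : β) (a : Fin m) :
    extPerm π c hc b a = if c a = b then π a else a := by
  by_cases h : c a = b
  · rw [if_pos h, extPerm,
      Equiv.Perm.extendDomain_apply_subtype _ (Equiv.refl (Subtype (fun a => c a = b))) h]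
    rfl
  · rw [if_neg h, extPerm, Equiv.Perm.extendDomain_apply_not_subtype]
    exact h

theorem extPerm_commute (π : Equiv.Perm (Fin m)) (c : Fin m → β)
    (hc : ∀ i, c (π i) = c i) (b b' : β) :
    Commute (extPerm π c hc b) (extPerm π c hc b') := by
  rcases eq_or_ne b b' with rfl | hbb
  · exact Commute.refl _
  · apply Equiv.ext
    intro a
    simp only [Equiv.Perm.mul_apply, extPerm_apply]
    by_cases h : c a = b
    · have h' : ¬ c a = b' := by rw [h]; exact hbb
      have hπ : c (π a) = b := by rw [hc]; exact h
      have hπ' : ¬ c (π a) = b' := by rw [hc]; exact h'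
      simp [h, h', hπ, hπ', hbb, hbb.symm]
    · by_cases h2 : c a = b'
      · have hπ : c (π a) = b' := by rw [hc]; exact h2
        have hπ' : ¬ c (π a) = b := by rw [hc]; exact h
        simp [h, h2, hπ, hπ', hbb, hbb.symm]
      · simp [h, h2]

theorem noncommProd_extPerm (π : Equiv.Perm (Fin m)) (c : Fin m → β)
    (hc : ∀ i, c (π i) = c i) (S : Finset β) (a : Fin m) :
    (S.noncommProd (fun b => extPerm π c hc b)
      (fun b _ b' _ _ => extPerm_commute π c hc b b')) a
      = if c a ∈ S then π a else a := by
  induction S using Finset.induction_on with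
  | empty => simp; rfl
  | @insert b S hb ih =>
    refine (congrArg (fun g : Equiv.Perm (Fin m) => g a) (Finset.noncommProd_insert_of_notMem S b _ _ hb)).trans ?_
    rw [Equiv.Perm.mul_apply, ih]
    by_cases h : c a ∈ S
    · rw [if_pos h, if_pos (Finset.mem_insert_of_mem h), extPerm_apply]
      have : c (π a) = c a := hc a
      by_cases h2 : c (π a) = b
      · rw [this] at h2; subst h2; exact absurd h hb
      · rw [if_neg h2]
    · rw [if_neg h, extPerm_apply]
      by_cases h2 : c a = b
      · rw [if_pos h2, if_pos (Finset.mem_insert.2 (Or.inl h2))]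
      · rw [if_neg h2, if_neg (by simp [h2, h])]

theorem sign_eq_prod_fibers (π : Equiv.Perm (Fin m)) (c : Fin m → β)
    (hc : ∀ i, c (π i) = c i) :
    Equiv.Perm.sign π = ∏ b ∈ Finset.univ.image c,
      Equiv.Perm.sign (π.subtypePerm (p := fun a => c a = b) (fiber_iff π c hc b)) := by
  have hπ : π = (Finset.univ.image c).noncommProd (fun b => extPerm π c hc b)
      (fun b _ b' _ _ => extPerm_commute π c hc b b') := by
    apply Equiv.ext
    intro a
    rw [noncommProd_extPerm, if_pos (Finset.mem_image_of_mem c (Finset.mem_univ a))]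
  calc Equiv.Perm.sign π
      = Equiv.Perm.sign ((Finset.univ.image c).noncommProd (fun b => extPerm π c hc b)
        (fun b _ b' _ _ => extPerm_commute π c hc b b')) := by rw [← hπ]
    _ = (Finset.univ.image c).noncommProd
          (fun b => Equiv.Perm.sign (extPerm π c hc b)) _ :=
        Finset.map_noncommProd _ _ _ Equiv.Perm.sign
    _ = ∏ b ∈ Finset.univ.image c, Equiv.Perm.sign (extPerm π c hc b) :=
        Finset.noncommProd_eq_prod _ _
    _ = _ := by
        apply Finset.prod_congr rfl
        intro b _
        rw [extPerm, Equiv.Perm.sign_extendDomain]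


theorem frob_aeval (g : Polynomial (ZMod 2)) (z : K) (hz : Polynomial.aeval z g = 0) (n : ℕ) :
    Polynomial.aeval (z ^ 2 ^ n) g = 0 := by
  have h := Polynomial.hom_eval₂ g (algebraMap (ZMod 2) K) (iterateFrobenius K 2 n) z
  rw [Polynomial.aeval_def] at hz ⊢
  have hcomp : (iterateFrobenius K 2 n).comp (algebraMap (ZMod 2) K) = algebraMap (ZMod 2) K :=
    Subsingleton.elim _ _
  rw [hcomp] at h
  simp only [iterateFrobenius_def] at h
  rw [← h, hz, zero_pow (by positivity : (0:ℕ) < 2 ^ n).ne']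

theorem pow_pow_injective (n : ℕ) : Function.Injective (fun z : K => z ^ 2 ^ n) := by
  have : (fun z : K => z ^ 2 ^ n) = ⇑(iterateFrobenius K 2 n) := by
    funext z; rw [iterateFrobenius_def]
  rw [this]
  exact (iterateFrobenius K 2 n).injective

noncomputable def frobAlg (k : ℕ) : K →ₐ[ZMod 2] K :=
  { iterateFrobenius K 2 k with
    commutes' := fun r => by
      have h : (iterateFrobenius K 2 k).comp (algebraMap (ZMod 2) K) = algebraMap (ZMod 2) K :=
        Subsingleton.elim _ _
      exact congrFun (congrArg DFunLike.coe h) r }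

/-- If `z^(2^k) = z` with `1 ≤ k` then the degree of the minimal polynomial of `z` is `≤ k`. -/
theorem minpoly_deg_le (z : K) (hz : IsIntegral (ZMod 2) z) (k : ℕ) (hk : 1 ≤ k)
    (hzk : z ^ 2 ^ k = z) : (minpoly (ZMod 2) z).natDegree ≤ k := by
  have hadj : ∀ e : K, e ∈ IntermediateField.adjoin (ZMod 2) {z} → e ^ 2 ^ k = e := by
    intro e he
    have h1 : (IntermediateField.adjoin (ZMod 2) {z}).toSubalgebra
        = Algebra.adjoin (ZMod 2) {z} :=
      IntermediateField.adjoin_simple_toSubalgebra_of_isAlgebraic hz.isAlgebraic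
    have he' : e ∈ Algebra.adjoin (ZMod 2) {z} := by rw [← h1]; exact he
    have hsub : Algebra.adjoin (ZMod 2) {z} ≤ (AlgHom.equalizer (frobAlg k) (AlgHom.id _ _)) := by
      apply Algebra.adjoin_le
      intro w hw
      rw [Set.mem_singleton_iff] at hw
      subst hw
      show (iterateFrobenius K 2 k) w = w
      rw [iterateFrobenius_def]
      exact hzk
    have h2 : (iterateFrobenius K 2 k) e = e := hsub he'
    rwa [iterateFrobenius_def] at h2
  -- cardinality bound
  have hfd : FiniteDimensional (ZMod 2) (IntermediateField.adjoin (ZMod 2) {z}) :=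
    IntermediateField.adjoin.finiteDimensional hz
  have hfin : Finite (IntermediateField.adjoin (ZMod 2) {z}) :=
    Module.finite_of_finite (ZMod 2)
  cases nonempty_fintype (IntermediateField.adjoin (ZMod 2) {z})
  have hcard : Fintype.card (IntermediateField.adjoin (ZMod 2) {z})
      = 2 ^ Module.finrank (ZMod 2) (IntermediateField.adjoin (ZMod 2) {z}) := by
    have h := @Module.card_eq_pow_finrank (ZMod 2) (IntermediateField.adjoin (ZMod 2) {z}) _ _ _ _ _
    rwa [ZMod.card] at h
  have hrank : Module.finrank (ZMod 2) (IntermediateField.adjoin (ZMod 2) {z})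
      = (minpoly (ZMod 2) z).natDegree := IntermediateField.adjoin.finrank hz
  -- roots bound
  set q : Polynomial K := X ^ 2 ^ k - X with hq
  have hqdeg : q.natDegree = 2 ^ k := by
    rw [hq]
    have h1 : (X : Polynomial K).natDegree < ((X : Polynomial K) ^ 2 ^ k).natDegree := by
      rw [natDegree_X_pow, natDegree_X]
      exact Nat.one_lt_two_pow_iff.2 (by omega)
    rw [natDegree_sub_eq_left_of_natDegree_lt h1, natDegree_X_pow]
  have hq0 : q ≠ 0 := by
    intro h
    have := hqdeg
    rw [h, natDegree_zero] at this
    exact absurd this.symm (by positivity)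
  have hinj : Function.Injective
      (fun e : IntermediateField.adjoin (ZMod 2) {z} => (⟨(e : K), by
        rw [Multiset.mem_toFinset, mem_roots hq0]
        simp only [IsRoot.def, hq, eval_sub, eval_pow, eval_X]
        rw [hadj e e.2, sub_self]⟩ : {w : K // w ∈ q.roots.toFinset})) := by
    intro a b hab
    rwa [Subtype.mk.injEq, Subtype.coe_inj] at hab
  have hle := Fintype.card_le_of_injective _ hinj
  have hroots : Fintype.card {w : K // w ∈ q.roots.toFinset} ≤ 2 ^ k := by
    rw [Fintype.card_coe]
    exact le_trans (Multiset.toFinset_card_le _) (le_trans (card_roots' q) hqdeg.le)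
  have : 2 ^ (minpoly (ZMod 2) z).natDegree ≤ 2 ^ k := by
    rw [← hrank, ← hcard]
    exact le_trans hle hroots
  exact (Nat.pow_le_pow_iff_right (by omega)).1 this

theorem exists_frob_pow_eq (z w : K) (hz : IsIntegral (ZMod 2) z)
    (hw : Polynomial.aeval w (minpoly (ZMod 2) z) = 0) : ∃ k : ℕ, z ^ 2 ^ k = w := by
  set g := minpoly (ZMod 2) z with hg
  set d := g.natDegree with hd
  have hd0 : 0 < d := minpoly.natDegree_pos hz
  set u : Fin d → K := fun i => z ^ 2 ^ (i : ℕ) with hu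
  have huinj : Function.Injective u := by
    have haux : ∀ i j : Fin d, i < j → u i ≠ u j := by
      intro i j hij heq
      have hij' : (i : ℕ) < (j : ℕ) := hij
      have hjd : (j : ℕ) < d := j.isLt
      set k := (j : ℕ) - (i : ℕ) with hk
      have hk1 : 1 ≤ k := by omega
      have hkd : k < d := by omega
      have hzk : z ^ 2 ^ k = z := by
        apply pow_pow_injective (i : ℕ)
        simp only
        rw [← pow_mul, ← pow_add]
        have : k + (i : ℕ) = (j : ℕ) := by omega
        rw [this]
        exact heq.symm
      have hle := minpoly_deg_le z hz k hk1 hzk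
      rw [← hg, ← hd] at hle
      omega
    intro i j hij
    rcases lt_trichotomy i j with h | h | h
    · exact absurd hij (haux i j h)
    · exact h
    · exact absurd hij.symm (haux j i h)
  -- all u i are roots of g, and w is a root; count
  set gK : Polynomial K := g.map (algebraMap (ZMod 2) K) with hgK
  have hg0 : g ≠ 0 := minpoly.ne_zero hz
  have hgK0 : gK ≠ 0 := Polynomial.map_ne_zero hg0
  have hgKdeg : gK.natDegree = d := natDegree_map _
  have hmem : ∀ i : Fin d, u i ∈ gK.roots.toFinset := by
    intro i
    rw [Multiset.mem_toFinset, mem_roots hgK0]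
    have := frob_aeval g z (minpoly.aeval (ZMod 2) z) (i : ℕ)
    rwa [Polynomial.aeval_def, ← Polynomial.eval_map] at this
  have hwmem : w ∈ gK.roots.toFinset := by
    rw [Multiset.mem_toFinset, mem_roots hgK0]
    rwa [Polynomial.aeval_def, ← Polynomial.eval_map] at hw
  set O : Finset K := Finset.image u Finset.univ with hO
  have hOcard : O.card = d := by
    rw [hO, Finset.card_image_of_injective _ huinj, Finset.card_univ, Fintype.card_fin]
  have hOsub : O ⊆ gK.roots.toFinset := by
    intro e he
    rw [hO, Finset.mem_image] at he
    obtain ⟨i, _, rfl⟩ := he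
    exact hmem i
  have hOeq : O = gK.roots.toFinset := by
    apply Finset.eq_of_subset_of_card_le hOsub
    rw [hOcard]
    exact le_trans (Multiset.toFinset_card_le _) (le_trans (card_roots' gK) hgKdeg.le)
  rw [← hOeq, hO, Finset.mem_image] at hwmem
  obtain ⟨i, _, hi⟩ := hwmem
  exact ⟨(i : ℕ), hi⟩


theorem exists_roots_fn {L : Type*} [Field L] [IsAlgClosed L] :
    ∀ (m : ℕ) (p : Polynomial L), p.Monic → p.natDegree = m →
      ∃ y : Fin m → L, p = ∏ i, (X - C (y i)) := by
  intro m
  induction m with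
  | zero =>
    intro p hp hdeg
    exact ⟨fun i => i.elim0, by
      rw [(Monic.natDegree_eq_zero hp).1 hdeg]
      simp⟩
  | succ n ih =>
    intro p hp hdeg
    have hdeg0 : p.degree ≠ 0 := by
      rw [degree_eq_natDegree hp.ne_zero, hdeg]
      intro h
      have : ((n + 1 : ℕ) : WithBot ℕ) = ((0 : ℕ) : WithBot ℕ) := by exact_mod_cast h
      have := Nat.cast_injective (R := WithBot ℕ) this
      omega
    obtain ⟨a, ha⟩ := IsAlgClosed.exists_root p hdeg0
    have hdvd : X - C a ∣ p := dvd_iff_isRoot.2 ha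
    obtain ⟨q, hq⟩ := hdvd
    have hqmonic : q.Monic := by
      have h1 : (X - C a).Monic := monic_X_sub_C a
      have := hp
      rw [hq] at this
      exact h1.of_mul_monic_left this
    have hqdeg : q.natDegree = n := by
      have := hdeg
      rw [hq, natDegree_mul (monic_X_sub_C a).ne_zero hqmonic.ne_zero,
        natDegree_X_sub_C] at this
      omega
    obtain ⟨y', hy'⟩ := ih q hqmonic hqdeg
    refine ⟨Fin.cons a y', ?_⟩
    rw [hq, hy', Fin.prod_univ_succ]
    simp


theorem monic_of_ne_zero {p : Polynomial (ZMod 2)} (hp : p ≠ 0) : p.Monic := by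
  have h := leadingCoeff_ne_zero.2 hp
  rcases (by decide : ∀ s : ZMod 2, s = 0 ∨ s = 1) p.leadingCoeff with h0 | h1
  · exact absurd h0 h
  · exact h1

theorem charTwoSide (m r : ℕ) (f : Polynomial (ZMod 2)) (hfm : f.Monic)
    (hfdeg : f.natDegree = m) (hsf : Squarefree f)
    (hr : r = (UniqueFactorizationMonoid.normalizedFactors f).card) :
    ∃ (y : Fin m → K) (π : Equiv.Perm (Fin m)),
      f.map (algebraMap (ZMod 2) K) = ∏ i, (X - C (y i)) ∧ Function.Injective y ∧
      (∀ i, y (π i) = (y i) ^ 2) ∧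
      (Equiv.Perm.sign π = 1 ↔ r % 2 = m % 2) := by
  have hf0 : f ≠ 0 := hfm.ne_zero
  set ι := algebraMap (ZMod 2) K with hι
  -- roots
  obtain ⟨y, hy⟩ := exists_roots_fn m (f.map ι) (hfm.map ι)
    (by rw [hfm.natDegree_map]; exact hfdeg)
  -- injectivity
  have hyinj : Function.Injective y := by
    have hsep : f.Separable := PerfectField.separable_iff_squarefree.2 hsf
    have hsepK : (f.map ι).Separable := hsep.map
    rw [hy] at hsepK
    exact separable_prod_X_sub_C_iff.1 hsepK
  -- every y i is a root of f
  have haev : ∀ i, Polynomial.aeval (y i) f = 0 := by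
    intro i
    rw [Polynomial.aeval_def, ← Polynomial.eval_map, hy, eval_prod]
    apply Finset.prod_eq_zero (Finset.mem_univ i)
    simp
  have hint : ∀ i, IsIntegral (ZMod 2) (y i) := by
    intro i
    exact ⟨f, hfm, by rw [← Polynomial.aeval_def]; exact haev i⟩
  -- Frobenius permutes the roots
  have hex : ∀ i, ∃ j, y j = (y i) ^ 2 := by
    intro i
    have h1 : Polynomial.aeval ((y i) ^ 2) f = 0 := by
      have := frob_aeval f (y i) (haev i) 1
      norm_num at this
      exact this
    rw [Polynomial.aeval_def, ← Polynomial.eval_map, hy, eval_prod] at h1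
    rw [Finset.prod_eq_zero_iff] at h1
    obtain ⟨j, _, hj⟩ := h1
    simp only [eval_sub, eval_X, eval_C] at hj
    exact ⟨j, (sub_eq_zero.1 hj).symm⟩
  choose p0 hp0 using hex
  have hsq : Function.Injective (fun z : K => z ^ 2) := by
    have := pow_pow_injective 1
    norm_num at this
    exact this
  have hp0inj : Function.Injective p0 := by
    intro i j hij
    apply hyinj
    have h2 : (y i) ^ 2 = (y j) ^ 2 := by rw [← hp0 i, ← hp0 j, hij]
    exact hsq h2
  set π : Equiv.Perm (Fin m) :=
    Equiv.ofBijective p0 ((Fintype.bijective_iff_injective_and_card p0).2 ⟨hp0inj, rfl⟩)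
    with hπdef
  have hπ : ∀ i, y (π i) = (y i) ^ 2 := fun i => hp0 i
  have hπpow : ∀ (k : ℕ) (i : Fin m), y ((π ^ k) i) = (y i) ^ 2 ^ k := by
    intro k
    induction k with
    | zero => intro i; simp
    | succ n ih =>
      intro i
      rw [pow_succ, Equiv.Perm.mul_apply, ih (π i), hπ i, ← pow_mul,
        show 2 * 2 ^ n = 2 ^ (n + 1) by ring]
  -- the irreducible factor associated to each root
  set c : Fin m → Polynomial (ZMod 2) := fun i => minpoly (ZMod 2) (y i) with hc
  -- Frobenius-equivariant
  have hfrobEquiv : ∃ e : K ≃ₐ[ZMod 2] K, ∀ z : K, e z = z ^ 2 := by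
    refine ⟨AlgEquiv.ofRingEquiv (f := frobeniusEquiv K 2) (fun x => ?_), fun z => ?_⟩
    · exact congrFun (congrArg DFunLike.coe (Subsingleton.elim
        (((frobeniusEquiv K 2 : K →+* K)).comp ι) ι)) x
    · show frobeniusEquiv K 2 z = z ^ 2
      rw [frobeniusEquiv_apply, frobenius_def]
  obtain ⟨frobE, hfrobE⟩ := hfrobEquiv
  have hcπ : ∀ i, c (π i) = c i := by
    intro i
    show minpoly (ZMod 2) (y (π i)) = minpoly (ZMod 2) (y i)
    rw [hπ i, ← hfrobE (y i)]
    exact minpoly.algEquiv_eq frobE (y i)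
  -- image of c is the set of normalized factors
  have himage : Finset.univ.image c
      = (UniqueFactorizationMonoid.normalizedFactors f).toFinset := by
    ext g
    simp only [Finset.mem_image, Multiset.mem_toFinset]
    constructor
    · rintro ⟨i, _, rfl⟩
      have hirr : Irreducible (c i) := minpoly.irreducible (hint i)
      have hdvd : c i ∣ f := minpoly.dvd (ZMod 2) (y i) (haev i)
      obtain ⟨q, hqmem, hassoc⟩ :=
        UniqueFactorizationMonoid.exists_mem_normalizedFactors_of_dvd hf0 hirr hdvd
      have hq0 : q ≠ 0 := (UniqueFactorizationMonoid.irreducible_of_normalized_factor q hqmem).ne_zero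
      have : c i = q := eq_of_monic_of_associated (minpoly.monic (hint i)) (monic_of_ne_zero hq0) hassoc
      rwa [this]
    · intro hg
      have hgirr : Irreducible g := UniqueFactorizationMonoid.irreducible_of_normalized_factor g hg
      have hgdvd : g ∣ f := UniqueFactorizationMonoid.dvd_of_mem_normalizedFactors hg
      have hgdeg : (g.map ι).degree ≠ 0 := by
        rw [degree_map]
        exact (degree_pos_of_irreducible hgirr).ne'
      obtain ⟨z, hz⟩ := IsAlgClosed.exists_root (g.map ι) hgdeg
      have hzf : Polynomial.eval z (f.map ι) = 0 := by
        apply Polynomial.eval_eq_zero_of_dvd_of_eval_eq_zero (Polynomial.map_dvd ι hgdvd)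
        exact hz
      rw [hy, eval_prod, Finset.prod_eq_zero_iff] at hzf
      obtain ⟨i, _, hi⟩ := hzf
      simp only [eval_sub, eval_X, eval_C] at hi
      have hzi : z = y i := sub_eq_zero.1 hi
      refine ⟨i, Finset.mem_univ i, ?_⟩
      symm
      apply minpoly.eq_of_irreducible_of_monic hgirr _ (monic_of_ne_zero hgirr.ne_zero)
      rw [Polynomial.aeval_def, ← Polynomial.eval_map, ← hzi]
      exact hz
  -- r equals the number of fibers
  have hnodup : (UniqueFactorizationMonoid.normalizedFactors f).Nodup :=
    (UniqueFactorizationMonoid.squarefree_iff_nodup_normalizedFactors hf0).1 hsf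
  have hrcard : r = (Finset.univ.image c).card := by
    rw [himage, hr, Multiset.toFinset_card_of_nodup hnodup]
  -- transitivity on each fiber
  have htrans : ∀ b ∈ Finset.univ.image c, ∀ s t : {a : Fin m // c a = b},
      ∃ k : ℕ, ((π.subtypePerm (fiber_iff π c hcπ b)) ^ k) s = t := by
    rintro b _ ⟨s, hs⟩ ⟨t, ht⟩
    have haevt : Polynomial.aeval (y t) (minpoly (ZMod 2) (y s)) = 0 := by
      show Polynomial.aeval (y t) (c s) = 0
      rw [hs, ← ht]
      exact minpoly.aeval (ZMod 2) (y t)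
    obtain ⟨k, hk⟩ := exists_frob_pow_eq (y s) (y t) (hint s) haevt
    refine ⟨k, ?_⟩
    rw [Equiv.Perm.subtypePerm_pow]
    apply Subtype.ext
    show (π ^ k) s = t
    apply hyinj
    rw [hπpow k s, hk]
  -- sign computation
  have hsign := sign_eq_prod_fibers π c hcπ
  have hfib : ∀ b ∈ Finset.univ.image c,
      Equiv.Perm.sign (π.subtypePerm (p := fun a => c a = b) (fiber_iff π c hcπ b))
        = (-1 : ℤˣ) ^ (Fintype.card {a : Fin m // c a = b} - 1) := by
    intro b hb
    have hne : Nonempty {a : Fin m // c a = b} := by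
      rw [Finset.mem_image] at hb
      obtain ⟨a, _, ha⟩ := hb
      exact ⟨⟨a, ha⟩⟩
    exact sign_of_transitive _ (htrans b hb)
  rw [Finset.prod_congr rfl hfib, Finset.prod_pow_eq_pow_sum] at hsign
  set E := ∑ b ∈ Finset.univ.image c, (Fintype.card {a : Fin m // c a = b} - 1) with hE
  -- counting
  have hcards : ∑ b ∈ Finset.univ.image c, Fintype.card {a : Fin m // c a = b} = m := by
    have h1 := Finset.card_eq_sum_card_fiberwise
      (fun a (_ : a ∈ (Finset.univ : Finset (Fin m))) => Finset.mem_image_of_mem c (Finset.mem_univ a))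
    rw [Finset.card_univ, Fintype.card_fin] at h1
    have h2 : ∑ b ∈ Finset.univ.image c, Fintype.card {a : Fin m // c a = b}
        = ∑ b ∈ Finset.univ.image c, (Finset.univ.filter (fun a => c a = b)).card :=
      Finset.sum_congr rfl (fun b _ => Fintype.card_subtype _)
    rw [h2, ← h1]
  have hpos : ∀ b ∈ Finset.univ.image c, 1 ≤ Fintype.card {a : Fin m // c a = b} := by
    intro b hb
    rw [Finset.mem_image] at hb
    obtain ⟨a, _, ha⟩ := hb
    exact Fintype.card_pos_iff.2 ⟨⟨a, ha⟩⟩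
  have hEm : E + r = m := by
    rw [hrcard, hE]
    have : ∑ b ∈ Finset.univ.image c, (Fintype.card {a : Fin m // c a = b} - 1)
        + (Finset.univ.image c).card
        = ∑ b ∈ Finset.univ.image c, ((Fintype.card {a : Fin m // c a = b} - 1) + 1) := by
      rw [Finset.sum_add_distrib, Finset.sum_const, smul_eq_mul, mul_one]
    rw [this]
    have h3 : ∑ b ∈ Finset.univ.image c, ((Fintype.card {a : Fin m // c a = b} - 1) + 1)
        = ∑ b ∈ Finset.univ.image c, Fintype.card {a : Fin m // c a = b} :=
      Finset.sum_congr rfl (fun b hb => by have := hpos b hb; omega)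
    rw [h3, hcards]
  refine ⟨y, π, hy, hyinj, hπ, ?_⟩
  rw [hsign]
  rw [neg_one_pow_eq_one_iff_even (by decide : (-1 : ℤˣ) ≠ 1)]
  rw [Nat.even_iff]
  omega


end SwanAux

open SwanAux in
/-- Stickelberger–Swan theorem: for a squarefree `f ∈ F₂[x]` of degree `m ≥ 1` with `r`
irreducible factors, and any monic lift `F ∈ ℤ[x]` of `f`, the discriminant
`D(F) = ∏_{i<j} (xᵢ - xⱼ)²` (computed from the complex roots of `F`) satisfies
`D(F) ≡ 1` or `5 (mod 8)`, and `r ≡ m (mod 2)` iff `D(F) ≡ 1 (mod 8)`. -/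
theorem stickelberger_swan
    (m : ℕ) (hm : 1 ≤ m)
    (f : Polynomial (ZMod 2)) (hfdeg : f.natDegree = m) (hsf : Squarefree f)
    (r : ℕ) (hr : r = (UniqueFactorizationMonoid.normalizedFactors f).card)
    (F : Polynomial ℤ) (hF : F.Monic) (hFdeg : F.natDegree = m)
    (hFf : F.map (Int.castRingHom (ZMod 2)) = f)
    (x : Fin m → ℂ)
    (hx : F.map (Int.castRingHom ℂ) = ∏ i : Fin m, (X - C (x i)))
    (D : ℤ)
    (hD : (D : ℂ) =
      ∏ i : Fin m, ∏ j ∈ Finset.univ.filter (fun j => i < j), (x i - x j) ^ 2) :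
    (D % 8 = 1 ∨ D % 8 = 5) ∧ (r % 2 = m % 2 ↔ D % 8 = 1) := by
  classical
  have hfm : f.Monic := by
    rw [← hFf]
    exact hF.map _
  obtain ⟨y, π, hy, hyinj, hπ, hsigniff⟩ := SwanAux.charTwoSide m r f hfm hfdeg hsf hr
  set cz : Fin m → ℤ := fun k => (-1) ^ ((k : ℕ) + 1) * F.coeff (m - ((k : ℕ) + 1)) with hcz
  -- ℂ side esymm equalities
  have hxesymm : ∀ k : Fin m, algebraMap ℤ ℂ (cz k)
      = MvPolynomial.aeval x (MvPolynomial.esymm (Fin m) ℤ ((k : ℕ) + 1)) := by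
    intro k
    have hk1 : (k : ℕ) + 1 ≤ m := k.isLt
    have h1 := SwanAux.coeff_prod_X_sub_C x hk1
    rw [← hx, Polynomial.coeff_map] at h1
    have h2 : (Int.castRingHom ℂ) (F.coeff (m - ((k : ℕ) + 1)))
        = ((F.coeff (m - ((k : ℕ) + 1)) : ℂ)) := rfl
    rw [h2] at h1
    simp only [hcz, map_mul, map_pow, map_neg, map_one, eq_intCast, Int.cast_mul,
      Int.cast_pow, Int.cast_neg, Int.cast_one]
    rw [h1, ← mul_assoc, ← pow_add, Even.neg_one_pow ⟨(k : ℕ) + 1, rfl⟩, one_mul]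
  -- casts from ℤ into K factor through ZMod 2
  have hcast2 : ∀ z : ℤ, ((z : AlgebraicClosure (ZMod 2))) = algebraMap (ZMod 2) (AlgebraicClosure (ZMod 2)) ((z : ZMod 2)) := by
    intro z
    have hfacK : (Int.castRingHom (AlgebraicClosure (ZMod 2))) = (algebraMap (ZMod 2) (AlgebraicClosure (ZMod 2))).comp (Int.castRingHom (ZMod 2)) :=
      Subsingleton.elim _ _
    have h1 : ((z : AlgebraicClosure (ZMod 2))) = (Int.castRingHom (AlgebraicClosure (ZMod 2))) z := rfl
    rw [h1, hfacK, RingHom.comp_apply]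
    rfl
  -- K side esymm equalities
  have hyesymm : ∀ k : Fin m, algebraMap ℤ (AlgebraicClosure (ZMod 2)) (cz k)
      = MvPolynomial.aeval y (MvPolynomial.esymm (Fin m) ℤ ((k : ℕ) + 1)) := by
    intro k
    have hk1 : (k : ℕ) + 1 ≤ m := k.isLt
    have h1 := SwanAux.coeff_prod_X_sub_C y hk1
    rw [← hy, Polynomial.coeff_map] at h1
    have hcoeff : f.coeff (m - ((k : ℕ) + 1)) = ((F.coeff (m - ((k : ℕ) + 1)) : ZMod 2)) := by
      rw [← hFf, Polynomial.coeff_map]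
      rfl
    rw [eq_intCast, hcast2]
    simp only [hcz, Int.cast_mul, Int.cast_pow, Int.cast_neg, Int.cast_one, map_mul,
      map_pow, map_neg, map_one]
    rw [← hcoeff, h1, ← mul_assoc, ← pow_add, Even.neg_one_pow ⟨(k : ℕ) + 1, rfl⟩, one_mul]
    rfl
  -- transfer symmetric functions to ℤ
  obtain ⟨sz, hsC, hsK⟩ := SwanAux.transfer (SwanAux.PP m + SwanAux.NN m) SwanAux.symm_add
    x y cz hxesymm hyesymm
  obtain ⟨pz, hpC, hpK⟩ := SwanAux.transfer (SwanAux.PP m * SwanAux.NN m) SwanAux.symm_mul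
    x y cz hxesymm hyesymm
  rw [map_add, SwanAux.aeval_PP, SwanAux.aeval_NN, eq_intCast] at hsC hsK
  rw [map_mul, SwanAux.aeval_PP, SwanAux.aeval_NN, eq_intCast] at hpC hpK
  -- D = sz^2 - 4 pz
  have hDC : (D : ℂ) = (Pval x - Nval x) ^ 2 := by
    rw [hD]
    have h1 : ∀ i : Fin m, ∏ j ∈ Finset.univ.filter (fun j => i < j), (x i - x j) ^ 2
        = ∏ j ∈ Finset.Ioi i, (x j - x i) ^ 2 := by
      intro i
      rw [show Finset.univ.filter (fun j => i < j) = Finset.Ioi i from by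
        ext j; simp [Finset.mem_Ioi]]
      exact Finset.prod_congr rfl (fun j _ => by ring)
    rw [Finset.prod_congr rfl (fun i _ => h1 i), SwanAux.Pval_sub_Nval, ← Finset.prod_pow]
    exact Finset.prod_congr rfl (fun i _ => (Finset.prod_pow _ _ _))
  have hDint : D = sz ^ 2 - 4 * pz := by
    have hcast : (D : ℂ) = ((sz ^ 2 - 4 * pz : ℤ) : ℂ) := by
      rw [hDC]
      push_cast
      rw [hsC, hpC]
      ring
    exact_mod_cast hcast
  -- the Vandermonde determinant of the roots of f is nonzero
  have hVy : Pval y - Nval y ≠ 0 := by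
    rw [SwanAux.Pval_sub_Nval, Finset.prod_ne_zero_iff]
    intro i _
    rw [Finset.prod_ne_zero_iff]
    intro j hj
    rw [sub_ne_zero]
    intro hji
    exact absurd (hyinj hji) (Finset.mem_Ioi.1 hj).ne'
  have hsub : Pval y - Nval y = Pval y + Nval y := CharTwo.sub_eq_add _ _
  -- sz is odd
  have hs2 : ((sz : ZMod 2)) ≠ 0 := by
    intro h0
    apply hVy
    rw [hsub, ← hsK, hcast2 sz, h0, map_zero]
  have hsodd : ¬ ((2 : ℤ) ∣ sz) := by
    intro hdvd
    exact hs2 ((ZMod.intCast_zmod_eq_zero_iff_dvd sz 2).2 (by exact_mod_cast hdvd))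
  have hs1 : ((sz : ZMod 2)) = 1 := by
    rcases (by decide : ∀ s : ZMod 2, s = 0 ∨ s = 1) ((sz : ZMod 2)) with h | h
    · exact absurd h hs2
    · exact h
  have hPN1 : Pval y + Nval y = 1 := by
    rw [← hsK, hcast2 sz, hs1, map_one]
  have hBK : Nval y = 1 + Pval y := by
    have h1 : Nval y = 1 - Pval y := eq_sub_of_add_eq' hPN1
    rw [h1, CharTwo.sub_eq_add]
  -- sz^2 = 8u + 1
  have hoddsz : Odd sz := by rw [Int.odd_iff]; omega
  obtain ⟨t, ht⟩ := hoddsz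
  obtain ⟨u, hu⟩ := Int.even_mul_succ_self t
  have h8 : sz ^ 2 = 8 * u + 1 := by
    rw [ht]
    linear_combination 4 * hu
  -- Frobenius on Pval y
  have hfr : Pval y ^ 2 = (if Equiv.Perm.sign π = 1 then Pval y else Nval y) := by
    have h := SwanAux.map_Pval (frobenius (AlgebraicClosure (ZMod 2)) 2) y
    simp only [frobenius_def] at h
    rw [show (fun i => y i ^ 2) = (fun i => y (π i)) from funext (fun i => (hπ i).symm)] at h
    rw [SwanAux.Pval_comp_perm] at h
    exact h
  have hpzK : algebraMap (ZMod 2) (AlgebraicClosure (ZMod 2)) ((pz : ZMod 2)) = Pval y * Nval y := by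
    rw [← hcast2 pz, hpK]
  rcases Int.units_eq_one_or (Equiv.Perm.sign π) with hsgn | hsgn
  · -- even permutation : D ≡ 1 (mod 8)
    rw [if_pos hsgn] at hfr
    have hPB : Pval y * Nval y = 0 := by
      calc Pval y * Nval y = Pval y + Pval y ^ 2 := by rw [hBK]; ring
        _ = Pval y + Pval y := by rw [hfr]
        _ = 0 := CharTwo.add_self_eq_zero _
    have hpz0 : ((pz : ZMod 2)) = 0 := by
      apply (algebraMap (ZMod 2) (AlgebraicClosure (ZMod 2))).injective
      rw [map_zero, hpzK, hPB]
    have hpdvd : (2 : ℤ) ∣ pz := by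
      rwa [ZMod.intCast_zmod_eq_zero_iff_dvd] at hpz0
    obtain ⟨q, hq⟩ := hpdvd
    have hD8 : D % 8 = 1 := by omega
    exact ⟨Or.inl hD8, iff_of_true (hsigniff.1 hsgn) hD8⟩
  · -- odd permutation : D ≡ 5 (mod 8)
    rw [if_neg (by rw [hsgn]; decide)] at hfr
    rw [hBK] at hfr
    have hPB : Pval y * Nval y = 1 := by
      calc Pval y * Nval y = Pval y + Pval y ^ 2 := by rw [hBK]; ring
        _ = (Pval y + Pval y) + 1 := by rw [hfr]; ring
        _ = 0 + 1 := by rw [CharTwo.add_self_eq_zero]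
        _ = 1 := zero_add 1
    have hpz1 : ((pz : ZMod 2)) = 1 := by
      apply (algebraMap (ZMod 2) (AlgebraicClosure (ZMod 2))).injective
      rw [map_one, hpzK, hPB]
    have hpodd : ¬ ((2 : ℤ) ∣ pz) := by
      intro h2
      have h0 : ((pz : ZMod 2)) = 0 := (ZMod.intCast_zmod_eq_zero_iff_dvd pz 2).2 (by exact_mod_cast h2)
      rw [hpz1] at h0
      exact absurd h0 (by decide)
    have hoddpz : Odd pz := by rw [Int.odd_iff]; omega
    obtain ⟨q, hq⟩ := hoddpz
    have hD8 : D % 8 = 5 := by omega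
    refine ⟨Or.inr hD8, iff_of_false ?_ (by omega)⟩
    intro hrm
    have h1 := hsigniff.2 hrm
    rw [h1] at hsgn
    exact absurd hsgn (by decide)
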